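/- Let n = 2^r − 1 with r ≥ 3, let C ⊆ F_2^n be a perfect binary code, let i be a coordinate, let I and I' be the sets of i-even and i-odd codewords of C, let I_1 be the set of vectors at Hamming distance exactly 1 from I ∪ (I + e_i), and let I'_1 be the set of vectors at distance exactly 1 from I' ∪ (I' + e_i). Then the four sets I ∪ (I + e_i), I_1, I'_1, I' ∪ (I' + e_i) partition F_2^n and form a perfect 4-coloring of the Hamming graph H(n,2) with parameter matrix [[1, n−1, 0, 0], [2, 1, n−3, 0], [0, n−3, 1, 2], [0, 0, n−1, 1]]. -/

import Mathlib

/-- `C` is a perfect binary single-error-correcting code: every vector is at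
Hamming distance at most 1 from exactly one codeword. -/
def IsPerfectCode (n : ℕ) (C : Set (Fin n → ZMod 2)) : Prop :=
  ∀ v : Fin n → ZMod 2, ∃! c, c ∈ C ∧ hammingDist v c ≤ 1

/-- `x` is `i`-even: either `wt x` is odd and `x i = 1`, or `wt x` is even and
`x i = 0`. -/
def IEven (n : ℕ) (i : Fin n) (x : Fin n → ZMod 2) : Prop :=
  (Odd (hammingNorm x) ∧ x i = 1) ∨ (Even (hammingNorm x) ∧ x i = 0)

/-- The unit vector `e i`. -/
def unitVec (n : ℕ) (i : Fin n) : Fin n → ZMod 2 := Pi.single i 1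

/-- The set of vectors at Hamming distance exactly 1 from the set `S`. -/
def DistOne (n : ℕ) (S : Set (Fin n → ZMod 2)) : Set (Fin n → ZMod 2) :=
  {v | v ∉ S ∧ ∃ c ∈ S, hammingDist v c = 1}

namespace Aux
variable {n : ℕ}

lemma zmod2_cases (a : ZMod 2) : a = 0 ∨ a = 1 := by revert a; decide

lemma vadd_self (x : Fin n → ZMod 2) : x + x = 0 := by
  funext k; exact CharTwo.add_self_eq_zero (x k)

lemma vcancel (x y : Fin n → ZMod 2) : x + y + y = x := by
  rw [add_assoc, vadd_self, add_zero]

lemma hdist_eq (x y : Fin n → ZMod 2) : hammingDist x y = hammingNorm (x + y) := by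
  rw [hammingDist_eq_hammingNorm]
  congr 1
  funext k
  rw [Pi.add_apply, Pi.add_apply, Pi.neg_apply, CharTwo.neg_eq]

lemma unit_apply (j k : Fin n) : unitVec n j k = if k = j then 1 else 0 := by
  simp [unitVec, Pi.single_apply]

lemma unit_apply_self (j : Fin n) : unitVec n j j = 1 := by simp [unit_apply]

lemma unit_apply_ne {j k : Fin n} (h : k ≠ j) : unitVec n j k = 0 := by simp [unit_apply, h]

lemma unit_inj {j k : Fin n} (h : unitVec n j = unitVec n k) : j = k := by
  by_contra hne
  have := congrFun h j
  rw [unit_apply_self, unit_apply_ne hne] at this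
  exact one_ne_zero this

lemma unit_ne_zero (j : Fin n) : unitVec n j ≠ 0 := by
  intro h
  have := congrFun h j
  rw [unit_apply_self] at this
  simp at this

lemma norm_unit (j : Fin n) : hammingNorm (unitVec n j) = 1 := by
  classical
  rw [hammingNorm]
  rw [show (Finset.univ.filter fun k => unitVec n j k ≠ 0) = {j} from ?_]
  · simp
  · ext k
    simp only [Finset.mem_filter, Finset.mem_univ, true_and, Finset.mem_singleton]
    constructor
    · intro hk; by_contra hne; exact hk (unit_apply_ne hne)
    · intro hk; subst hk; rw [unit_apply_self]; exact one_ne_zero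

lemma eq_single_of_norm_one {z : Fin n → ZMod 2} (h : hammingNorm z = 1) :
    ∃ j, z = unitVec n j := by
  classical
  rw [hammingNorm, Finset.card_eq_one] at h
  obtain ⟨j, hj⟩ := h
  have hmem : ∀ k : Fin n, z k ≠ 0 ↔ k = j := by
    intro k
    rw [← Finset.mem_singleton, ← hj]
    simp
  refine ⟨j, funext fun k => ?_⟩
  by_cases hk : k = j
  · subst hk
    rw [unit_apply_self]
    rcases zmod2_cases (z k) with h0 | h1
    · exact absurd ((hmem k).mpr rfl) (by simp [h0])
    · exact h1
  · rw [unit_apply_ne hk]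
    by_contra hz
    exact hk ((hmem k).mp hz)

lemma dist_one_iff (v w : Fin n → ZMod 2) :
    hammingDist v w = 1 ↔ ∃ j, w = v + unitVec n j := by
  rw [hdist_eq]
  constructor
  · intro h
    obtain ⟨j, hj⟩ := eq_single_of_norm_one h
    exact ⟨j, by rw [← hj, ← add_assoc, vadd_self, zero_add]⟩
  · rintro ⟨j, rfl⟩
    rw [← add_assoc, vadd_self, zero_add, norm_unit]


lemma eq_pair_of_norm_two {z : Fin n → ZMod 2} (h : hammingNorm z = 2) :
    ∃ j k, j ≠ k ∧ z = unitVec n j + unitVec n k := by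
  classical
  rw [hammingNorm, Finset.card_eq_two] at h
  obtain ⟨j, k, hjk, hpair⟩ := h
  have hmem : ∀ m : Fin n, z m ≠ 0 ↔ (m = j ∨ m = k) := by
    intro m
    rw [show (m = j ∨ m = k) ↔ m ∈ ({j, k} : Finset (Fin n)) by simp, ← hpair]
    simp
  refine ⟨j, k, hjk, funext fun m => ?_⟩
  have hval : (unitVec n j + unitVec n k) m = if m = j then 1 else if m = k then 1 else 0 := by
    by_cases h1 : m = j
    · subst h1
      simp [Pi.add_apply, unit_apply_self, unit_apply_ne (show m ≠ k from hjk)]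
    · by_cases h2 : m = k
      · subst h2
        simp [Pi.add_apply, unit_apply_self, unit_apply_ne h1, h1]
      · simp [Pi.add_apply, unit_apply_ne h1, unit_apply_ne h2, h1, h2]
  rw [hval]
  by_cases h1 : m = j
  · simp only [h1, if_true]
    rcases zmod2_cases (z m) with h0 | hone
    · exact absurd ((hmem m).mpr (Or.inl h1)) (by simp [h0])
    · rw [← h1]; exact hone
  · by_cases h2 : m = k
    · simp only [h1, if_false, h2, if_true]
      rcases zmod2_cases (z m) with h0 | hone
      · exact absurd ((hmem m).mpr (Or.inr h2)) (by simp [h0])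
      · rw [ite_self, ← h2]; exact hone
    · simp only [h1, h2, if_false]
      by_contra hz
      rcases (hmem m).mp hz with h | h
      · exact h1 h
      · exact h2 h

/-- The linear functional classifying `i`-even vectors. -/
def phi (i : Fin n) (x : Fin n → ZMod 2) : ZMod 2 := (∑ j, x j) + x i

lemma phi_add (i : Fin n) (x y : Fin n → ZMod 2) :
    phi i (x + y) = phi i x + phi i y := by
  simp only [phi, Pi.add_apply, Finset.sum_add_distrib]
  ring

lemma norm_cast_eq_sum (x : Fin n → ZMod 2) :
    (hammingNorm x : ZMod 2) = ∑ j, x j := by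
  classical
  rw [hammingNorm]
  rw [Finset.card_filter]
  push_cast
  apply Finset.sum_congr rfl
  intro j _
  rcases zmod2_cases (x j) with h | h <;> simp [h]

lemma phi_eq (i : Fin n) (x : Fin n → ZMod 2) :
    phi i x = (hammingNorm x : ZMod 2) + x i := by
  rw [phi, norm_cast_eq_sum]

lemma phi_unit (i j : Fin n) : phi i (unitVec n j) = if j = i then 0 else 1 := by
  rw [phi_eq, norm_unit]
  by_cases h : j = i
  · subst h; rw [unit_apply_self, if_pos rfl]; decide
  · rw [unit_apply_ne (Ne.symm h)]; simp [h]

lemma cast_zmod2_zero_iff (m : ℕ) : (m : ZMod 2) = 0 ↔ Even m := by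
  rw [ZMod.natCast_eq_zero_iff]
  exact ⟨fun h => even_iff_two_dvd.mpr h, fun h => even_iff_two_dvd.mp h⟩

lemma iEven_iff_phi (i : Fin n) (x : Fin n → ZMod 2) :
    IEven n i x ↔ phi i x = 0 := by
  rw [IEven, phi_eq]
  rcases Nat.even_or_odd (hammingNorm x) with he | ho
  · have h0 : (hammingNorm x : ZMod 2) = 0 := (cast_zmod2_zero_iff _).mpr he
    rw [h0, zero_add]
    rcases zmod2_cases (x i) with h | h <;>
      simp [h, he, Nat.not_odd_iff_even.mpr he]
  · have h1 : (hammingNorm x : ZMod 2) = 1 := by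
      rcases zmod2_cases (hammingNorm x : ZMod 2) with h | h
      · exact absurd ((cast_zmod2_zero_iff _).mp h) (Nat.not_even_iff_odd.mpr ho)
      · exact h
    rw [h1]
    rcases zmod2_cases (x i) with h | h <;>
      simp [h, ho, Nat.not_even_iff_odd.mpr ho] <;> decide

lemma not_iEven_iff_phi (i : Fin n) (x : Fin n → ZMod 2) :
    ¬ IEven n i x ↔ phi i x = 1 := by
  rw [iEven_iff_phi]
  rcases zmod2_cases (phi i x) with h | h <;> simp [h]


section Code
variable {C : Set (Fin n → ZMod 2)} (hC : IsPerfectCode n C) {i : Fin n}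

lemma min_dist (hC : IsPerfectCode n C) {c c' : Fin n → ZMod 2}
    (hc : c ∈ C) (hc' : c' ∈ C) (h : hammingDist c c' ≤ 2) : c = c' := by
  classical
  by_cases h1 : hammingDist c c' ≤ 1
  · obtain ⟨u, _, hu⟩ := hC c
    have e1 := hu c ⟨hc, by simp⟩
    have e2 := hu c' ⟨hc', h1⟩
    exact e1.trans e2.symm
  · have h2 : hammingDist c c' = 2 := le_antisymm h (by omega)
    rw [hdist_eq] at h2
    obtain ⟨j, k, hjk, hz⟩ := eq_pair_of_norm_two h2
    set v := c + unitVec n j with hv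
    have d1 : hammingDist v c = 1 := by
      rw [hdist_eq, hv, add_comm c, add_assoc, vadd_self, add_zero, norm_unit]
    have d2 : hammingDist v c' = 1 := by
      have hc'eq : c' = v + unitVec n k := by
        rw [hv]
        have : c + c' + c = unitVec n j + unitVec n k + c := by rw [hz]
        rw [add_comm (c + c') c, ← add_assoc, vadd_self, zero_add] at this
        rw [this]; abel
      rw [dist_one_iff]; exact ⟨k, hc'eq⟩
    obtain ⟨u, _, hu⟩ := hC v
    have e1 := hu c ⟨hc, le_of_eq d1⟩
    have e2 := hu c' ⟨hc', le_of_eq d2⟩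
    exact e1.trans e2.symm

/-- The unique codeword within distance 1 of `v`. -/
noncomputable def cw (hC : IsPerfectCode n C) (v : Fin n → ZMod 2) : Fin n → ZMod 2 :=
  (hC v).exists.choose

lemma cw_mem (v : Fin n → ZMod 2) : cw hC v ∈ C := (hC v).exists.choose_spec.1

lemma cw_dist (v : Fin n → ZMod 2) : hammingDist v (cw hC v) ≤ 1 :=
  (hC v).exists.choose_spec.2

lemma cw_unique {v c : Fin n → ZMod 2} (hc : c ∈ C) (h : hammingDist v c ≤ 1) :
    c = cw hC v := by
  obtain ⟨u, hu1, hu2⟩ := hC v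
  rw [hu2 c ⟨hc, h⟩, hu2 (cw hC v) ⟨cw_mem hC v, cw_dist hC v⟩]

lemma cw_self {c : Fin n → ZMod 2} (hc : c ∈ C) : cw hC c = c :=
  (cw_unique hC hc (by simp)).symm

lemma cw_add_unit {c : Fin n → ZMod 2} (hc : c ∈ C) (j : Fin n) :
    cw hC (c + unitVec n j) = c := by
  refine (cw_unique hC hc ?_).symm
  rw [hdist_eq, add_comm c, add_assoc, vadd_self, add_zero, norm_unit]

/-- decomposition of any vector relative to its codeword -/
lemma cw_decomp (v : Fin n → ZMod 2) :
    v = cw hC v ∨ ∃ j, v = cw hC v + unitVec n j := by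
  have h := cw_dist hC v
  interval_cases h' : hammingDist v (cw hC v)
  · left
    rw [hdist_eq] at h'
    have : v + cw hC v = 0 := by
      by_contra hne
      have : hammingNorm (v + cw hC v) ≠ 0 := by
        simpa [hammingNorm_eq_zero] using hne
      omega
    have := congrArg (· + cw hC v) this
    simpa [add_assoc, vadd_self] using this
  · right
    rw [dist_one_iff] at h'
    obtain ⟨j, hj⟩ := h'
    exact ⟨j, by rw [hj, vcancel]⟩

/-- `v` is "close to the code along direction i or 0" -/
def Ash (C : Set (Fin n → ZMod 2)) (i : Fin n) (v : Fin n → ZMod 2) : Prop :=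
  v ∈ C ∨ v + unitVec n i ∈ C

/-- The four color classes, parametrized by parity `ε` and shape `b`. -/
def Cl (hC : IsPerfectCode n C) (i : Fin n) (ε : ZMod 2) (b : Prop) :
    Set (Fin n → ZMod 2) :=
  {w | phi i (cw hC w) = ε ∧ (Ash C i w ↔ b)}


lemma dist_add_unit (v : Fin n → ZMod 2) (j : Fin n) :
    hammingDist v (v + unitVec n j) = 1 := by
  rw [hdist_eq, ← add_assoc, vadd_self, zero_add, norm_unit]

lemma add_unit_ne (v : Fin n → ZMod 2) (j : Fin n) : v + unitVec n j ≠ v := by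
  intro h
  have : unitVec n j = 0 := by
    have := congrArg (fun x => v + x) (add_left_cancel (a := v) (b := unitVec n j) (c := 0) ?_)
    · exact add_left_cancel (a := v) (b := unitVec n j) (c := 0) (by rw [add_zero, h])
    · rw [add_zero, h]
  exact unit_ne_zero j this

lemma unit_add_unit_ne_zero {a b : Fin n} (hab : a ≠ b) :
    unitVec n a + unitVec n b ≠ 0 := by
  intro h
  have := congrFun h a
  rw [Pi.add_apply, unit_apply_self, unit_apply_ne hab, Pi.zero_apply, add_zero] at this
  exact one_ne_zero this

lemma dist_add_two (c : Fin n → ZMod 2) (a b : Fin n) :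
    hammingDist c (c + unitVec n a + unitVec n b) ≤ 2 := by
  calc hammingDist c (c + unitVec n a + unitVec n b)
      ≤ hammingDist c (c + unitVec n a) +
        hammingDist (c + unitVec n a) (c + unitVec n a + unitVec n b) :=
        hammingDist_triangle _ _ _
    _ ≤ 2 := by rw [dist_add_unit, dist_add_unit]

/-- if `w = c + e_a + e_b` with `a ≠ b`, `c ∈ C`, then the codeword of `w` is
`c + e_a + e_b + e_p` for some `p ∉ {a, b}`. -/
lemma two_step {c : Fin n → ZMod 2} (hc : c ∈ C) {a b : Fin n} (hab : a ≠ b) :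
    ∃ p, p ≠ a ∧ p ≠ b ∧
      cw hC (c + unitVec n a + unitVec n b)
        = c + unitVec n a + unitVec n b + unitVec n p := by
  set w := c + unitVec n a + unitVec n b with hw
  have hwC : w ∉ C := by
    intro hmem
    have := min_dist hC hc hmem (dist_add_two c a b)
    have h0 : unitVec n a + unitVec n b = 0 := by
      have := this.symm
      rw [hw, add_assoc] at this
      have := add_left_cancel (a := c) (b := unitVec n a + unitVec n b) (c := 0)
        (by rw [this, add_zero])
      exact this
    exact unit_add_unit_ne_zero hab h0
  rcases cw_decomp hC w with h | ⟨p, hp⟩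
  · exact absurd (h ▸ cw_mem hC w) hwC
  · have hcw : cw hC w = w + unitVec n p := by
      conv_rhs => rw [hp, vcancel]
    refine ⟨p, ?_, ?_, hcw⟩
    · intro hpa
      subst hpa
      have heq : cw hC w = c + unitVec n b := by
        rw [hcw, hw, add_right_comm (c + unitVec n p), vcancel]
      have h1 : hammingDist c (cw hC w) ≤ 2 := by
        rw [heq, dist_add_unit]; omega
      have hmin := min_dist hC hc (cw_mem hC w) h1
      rw [heq] at hmin
      exact add_unit_ne c b hmin.symm
    · intro hpb
      subst hpb
      have heq : cw hC w = c + unitVec n a := by rw [hcw, hw, vcancel]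
      have h1 : hammingDist c (cw hC w) ≤ 2 := by
        rw [heq, dist_add_unit]; omega
      have hmin := min_dist hC hc (cw_mem hC w) h1
      rw [heq] at hmin
      exact add_unit_ne c a hmin.symm

lemma mem_Cl_iff {w : Fin n → ZMod 2} {ε : ZMod 2} {b : Prop} :
    w ∈ Cl hC i ε b ↔ (phi i (cw hC w) = ε ∧ (Ash C i w ↔ b)) := Iff.rfl

lemma mem_ClT_iff {w : Fin n → ZMod 2} {ε : ZMod 2} :
    w ∈ Cl hC i ε True ↔ (phi i (cw hC w) = ε ∧ Ash C i w) := by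
  rw [mem_Cl_iff, iff_true]

lemma mem_ClF_iff {w : Fin n → ZMod 2} {ε : ZMod 2} :
    w ∈ Cl hC i ε False ↔ (phi i (cw hC w) = ε ∧ ¬ Ash C i w) := by
  rw [mem_Cl_iff, iff_false]

lemma charA (ε : ZMod 2) :
    {x ∈ C | phi i x = ε} ∪ (fun x => x + unitVec n i) '' {x ∈ C | phi i x = ε}
      = Cl hC i ε True := by
  ext w
  constructor
  · rintro (⟨hwC, hφ⟩ | ⟨c, ⟨hcC, hφ⟩, rfl⟩)
    · exact (mem_ClT_iff hC).mpr ⟨by rw [cw_self hC hwC]; exact hφ, Or.inl hwC⟩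
    · refine (mem_ClT_iff hC).mpr ⟨by rw [cw_add_unit hC hcC]; exact hφ, Or.inr ?_⟩
      rw [vcancel]; exact hcC
  · intro hw
    obtain ⟨hφ, hA⟩ := (mem_ClT_iff hC).mp hw
    rcases hA with h | h
    · exact Or.inl ⟨h, by rw [← cw_self hC h]; exact hφ⟩
    · right
      refine ⟨w + unitVec n i, ⟨h, ?_⟩, by simp [vcancel]⟩
      have : w + unitVec n i = cw hC w :=
        cw_unique hC h (le_of_eq (dist_add_unit w i))
      rw [this]; exact hφ

lemma charB (ε : ZMod 2) :
    DistOne n (Cl hC i ε True) = Cl hC i ε False := by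
  ext w
  constructor
  · rintro ⟨hwA, a, haA, hda⟩
    obtain ⟨hφa, hAsha⟩ := (mem_ClT_iff hC).mp haA
    obtain ⟨m, hm⟩ := (dist_one_iff w a).mp hda
    rcases hAsha with haC | haC
    · -- a ∈ C
      have hwa : w = a + unitVec n m := by rw [hm, vcancel]
      have hcww : cw hC w = a := by rw [hwa, cw_add_unit hC haC]
      refine (mem_ClF_iff hC).mpr ⟨by rw [hcww, ← cw_self hC haC]; exact hφa, ?_⟩
      intro hAshw
      exact hwA ((mem_ClT_iff hC).mpr ⟨by rw [hcww, ← cw_self hC haC]; exact hφa, hAshw⟩)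
    · -- a + e i ∈ C
      set c := a + unitVec n i with hcdef
      have hcwa : cw hC a = c := (cw_unique hC haC (le_of_eq (dist_add_unit a i))).symm
      have hφc : phi i c = ε := by rw [← hcwa]; exact hφa
      have hac : a = c + unitVec n i := by rw [hcdef, vcancel]
      by_cases hmi : m = i
      · -- w = c, contradiction with w ∉ A
        subst hmi
        have hwc : w = c := by
          have : a = w + unitVec n m := hm
          rw [hcdef, this, vcancel]
        exfalso
        apply hwA
        exact (mem_ClT_iff hC).mpr
          ⟨by rw [hwc, cw_self hC haC]; exact hφc, Or.inl (hwc ▸ haC)⟩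
      · -- w = c + e i + e m, m ≠ i
        have hwc : w = c + unitVec n i + unitVec n m := by
          rw [← hac, hm, vcancel]
        obtain ⟨p, hpi, hpm, hcw⟩ := two_step hC haC (Ne.symm hmi)
        rw [← hwc] at hcw
        have hφw : phi i (cw hC w) = ε := by
          rw [hcw, hwc, phi_add, phi_add, phi_add, hφc, phi_unit, phi_unit, phi_unit,
            if_pos rfl, if_neg hmi, if_neg hpi]
          ring_nf
          rcases zmod2_cases ε with h | h <;> rw [h] <;> decide
        refine (mem_ClF_iff hC).mpr ⟨hφw, ?_⟩
        rintro (hwC | hwC)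
        · have : cw hC w = w := cw_self hC hwC
          rw [hcw] at this
          exact add_unit_ne w p this
        · have hwi : w + unitVec n i = c + unitVec n m := by
            rw [hwc, add_right_comm c, add_right_comm, vcancel]
          rw [hwi] at hwC
          have := min_dist hC haC hwC (by rw [dist_add_unit]; omega)
          exact add_unit_ne c m this.symm
  · intro hw
    obtain ⟨hφ, hA⟩ := (mem_ClF_iff hC).mp hw
    have hwC : w ∉ C := fun h => hA (Or.inl h)
    rcases cw_decomp hC w with h | ⟨j, hj⟩
    · exact absurd (h ▸ cw_mem hC w) hwC
    refine ⟨fun hmem => hA (((mem_ClT_iff hC).mp hmem).2), cw hC w, ?_, ?_⟩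
    · exact (mem_ClT_iff hC).mpr
        ⟨by rw [cw_self hC (cw_mem hC w)]; exact hφ, Or.inl (cw_mem hC w)⟩
    · have hcwj : cw hC w = w + unitVec n j := by
        conv_rhs => rw [hj, vcancel]
      rw [dist_one_iff]
      exact ⟨j, hcwj⟩


lemma swap_cancel (x y z : Fin n → ZMod 2) : x + y + z + y = x + z := by
  rw [add_right_comm x y z, vcancel]

lemma eps_ne (ε : ZMod 2) : ε + 1 ≠ ε := by
  rcases zmod2_cases ε with h | h <;> rw [h] <;> decide

lemma eps_add2 (ε : ZMod 2) : ε + 0 + 1 + 1 = ε := by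
  rcases zmod2_cases ε with h | h <;> rw [h] <;> decide

lemma eps_add3 (ε : ZMod 2) : ε + 1 + 1 + 1 = ε + 1 := by
  rcases zmod2_cases ε with h | h <;> rw [h] <;> decide

lemma cancel_units {s : Fin n → ZMod 2} {a b : Fin n}
    (h : s + unitVec n a = s + unitVec n b) : a = b :=
  unit_inj (add_left_cancel h)

lemma rowA0 {c : Fin n → ZMod 2} {ε : ZMod 2} (hc : c ∈ C) (hφ : phi i c = ε) :
    ∀ m : Fin n, phi i (cw hC (c + unitVec n m)) = ε ∧
      (Ash C i (c + unitVec n m) ↔ m = i) := by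
  intro m
  constructor
  · rw [cw_add_unit hC hc, hφ]
  · constructor
    · rintro (hwC | hwC)
      · have := min_dist hC hc hwC (by rw [dist_add_unit]; omega)
        exact absurd this.symm (add_unit_ne c m)
      · by_contra hmi
        have := min_dist hC hc hwC (dist_add_two c m i)
        rw [add_assoc] at this
        have h0 : unitVec n m + unitVec n i = 0 :=
          (add_left_cancel (show c + 0 = c + (unitVec n m + unitVec n i) by
            rw [add_zero]; exact this)).symm
        exact unit_add_unit_ne_zero hmi h0
    · rintro rfl
      exact Or.inr (by rw [vcancel]; exact hc)

lemma rowA1 {c : Fin n → ZMod 2} {ε : ZMod 2} (hc : c ∈ C) (hφ : phi i c = ε) :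
    ∀ m : Fin n, phi i (cw hC (c + unitVec n i + unitVec n m)) = ε ∧
      (Ash C i (c + unitVec n i + unitVec n m) ↔ m = i) := by
  intro m
  by_cases hmi : m = i
  · rw [hmi, vcancel]
    exact ⟨by rw [cw_self hC hc, hφ], iff_of_true (Or.inl hc) rfl⟩
  · obtain ⟨p, hpi, hpm, hcw⟩ := two_step hC hc (fun h => hmi h.symm)
    constructor
    · rw [hcw, phi_add, phi_add, phi_add, hφ, phi_unit, phi_unit, phi_unit,
        if_pos rfl, if_neg hmi, if_neg hpi, eps_add2]
    · refine iff_of_false ?_ hmi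
      rintro (hwC | hwC)
      · have h1 := cw_self hC hwC
        rw [hcw] at h1
        exact add_unit_ne _ p (by rw [← hcw] at h1 ⊢; exact h1)
      · rw [swap_cancel c (unitVec n i) (unitVec n m)] at hwC
        have := min_dist hC hc hwC (by rw [dist_add_unit]; omega)
        exact add_unit_ne c m this.symm

lemma rowB {c : Fin n → ZMod 2} {ε : ZMod 2} {j : Fin n}
    (hc : c ∈ C) (hφ : phi i c = ε) (hj : j ≠ i) :
    ∃ p : Fin n, p ≠ i ∧ p ≠ j ∧
      ∀ m : Fin n,
        ((m = j ∨ m = p) → (phi i (cw hC (c + unitVec n j + unitVec n m)) = ε ∧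
          Ash C i (c + unitVec n j + unitVec n m))) ∧
        (m = i → (phi i (cw hC (c + unitVec n j + unitVec n m)) = ε ∧
          ¬ Ash C i (c + unitVec n j + unitVec n m))) ∧
        (m ≠ i → m ≠ j → m ≠ p → (phi i (cw hC (c + unitVec n j + unitVec n m)) = ε + 1 ∧
          ¬ Ash C i (c + unitVec n j + unitVec n m))) := by
  obtain ⟨p, hpi, hpj, hcwu⟩ := two_step hC hc (fun h => hj h.symm)
  have hc'C : c + unitVec n i + unitVec n j + unitVec n p ∈ C := hcwu ▸ cw_mem hC _
  have hφc' : phi i (c + unitVec n i + unitVec n j + unitVec n p) = ε := by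
    rw [phi_add, phi_add, phi_add, hφ, phi_unit, phi_unit, phi_unit,
      if_pos rfl, if_neg hj, if_neg hpi, eps_add2]
  refine ⟨p, hpi, hpj, fun m => ⟨?_, ?_, ?_⟩⟩
  · rintro (h | h) <;> rw [h]
    · -- m = j : w = c
      rw [vcancel]
      exact ⟨by rw [cw_self hC hc, hφ], Or.inl hc⟩
    · -- m = p : w = c' + e i
      have hw : c + unitVec n j + unitVec n p
          = (c + unitVec n i + unitVec n j + unitVec n p) + unitVec n i := by
        rw [add_right_comm (c + unitVec n i + unitVec n j),
          swap_cancel c (unitVec n i) (unitVec n j)]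
      rw [hw]
      exact ⟨by rw [cw_add_unit hC hc'C, hφc'], Or.inr (by rw [vcancel]; exact hc'C)⟩
  · intro h; rw [h]
    -- m = i : w = u
    have hw : c + unitVec n j + unitVec n i = c + unitVec n i + unitVec n j :=
      add_right_comm c (unitVec n j) (unitVec n i)
    rw [hw]
    constructor
    · rw [hcwu, hφc']
    · rintro (hwC | hwC)
      · have h1 := cw_self hC hwC
        rw [hcwu] at h1
        exact add_unit_ne _ p (by rw [← hcwu] at h1 ⊢; exact h1)
      · rw [swap_cancel c (unitVec n i) (unitVec n j)] at hwC
        have := min_dist hC hc hwC (by rw [dist_add_unit]; omega)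
        exact add_unit_ne c j this.symm
  · intro hmi hmj hmp
    obtain ⟨q, hqj, hqm, hcww⟩ := two_step hC hc (fun h => hmj h.symm)
    have hqi : q ≠ i := by
      intro hqi'
      rw [hqi'] at hcww
      have habel : c + unitVec n j + unitVec n m + unitVec n i
          = (c + unitVec n i + unitVec n j) + unitVec n m := by abel
      have hmem : (c + unitVec n i + unitVec n j) + unitVec n m ∈ C := by
        rw [← habel, ← hcww]; exact cw_mem hC _
      have h1 : (c + unitVec n i + unitVec n j) + unitVec n m
          = cw hC (c + unitVec n i + unitVec n j) :=
        cw_unique hC hmem (le_of_eq (dist_add_unit _ m))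
      rw [hcwu] at h1
      exact hmp (cancel_units h1)
    refine ⟨?_, ?_⟩
    · rw [hcww, phi_add, phi_add, phi_add, hφ, phi_unit, phi_unit, phi_unit,
        if_neg hj, if_neg hmi, if_neg hqi, eps_add3]
    · rintro (hwC | hwC)
      · have h1 := cw_self hC hwC
        rw [hcww] at h1
        exact add_unit_ne _ q (by rw [← hcww] at h1 ⊢; exact h1)
      · have habel : c + unitVec n j + unitVec n m + unitVec n i
          = (c + unitVec n i + unitVec n j) + unitVec n m := by abel
        rw [habel] at hwC
        have h1 : (c + unitVec n i + unitVec n j) + unitVec n m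
            = cw hC (c + unitVec n i + unitVec n j) :=
          cw_unique hC hwC (le_of_eq (dist_add_unit _ m))
        rw [hcwu] at h1
        exact hmp (cancel_units h1)

lemma ncount (v : Fin n → ZMod 2) (P : Set (Fin n → ZMod 2)) :
    {w | hammingDist v w = 1 ∧ w ∈ P}.ncard = {m : Fin n | v + unitVec n m ∈ P}.ncard := by
  have hinj : Function.Injective (fun m : Fin n => v + unitVec n m) := by
    intro m m' h
    exact unit_inj (add_left_cancel h)
  have himg : {w | hammingDist v w = 1 ∧ w ∈ P}
      = (fun m : Fin n => v + unitVec n m) '' {m | v + unitVec n m ∈ P} := by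
    ext w
    constructor
    · rintro ⟨hd, hP⟩
      obtain ⟨m, hm⟩ := (dist_one_iff v w).mp hd
      exact ⟨m, show v + unitVec n m ∈ P from hm ▸ hP, hm.symm⟩
    · rintro ⟨m, hm, rfl⟩
      exact ⟨dist_add_unit v m, hm⟩
  rw [himg, Set.ncard_image_of_injective _ hinj]

lemma ncard_ne_singleton (i : Fin n) : ({m : Fin n | m ≠ i}).ncard = n - 1 := by
  have h : {m : Fin n | m ≠ i} = ({i} : Set (Fin n))ᶜ := by
    ext m; simp
  rw [h]
  have := Set.ncard_add_ncard_compl ({i} : Set (Fin n))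
  rw [Set.ncard_singleton, Nat.card_eq_fintype_card, Fintype.card_fin] at this
  omega

lemma ncard_ne_triple {i j p : Fin n} (hij : i ≠ j) (hip : i ≠ p) (hjp : j ≠ p) :
    ({m : Fin n | m ≠ i ∧ m ≠ j ∧ m ≠ p}).ncard = n - 3 := by
  have h : {m : Fin n | m ≠ i ∧ m ≠ j ∧ m ≠ p} = ({i, j, p} : Set (Fin n))ᶜ := by
    ext m; simp only [Set.mem_setOf_eq, Set.mem_compl_iff, Set.mem_insert_iff,
    Set.mem_singleton_iff]; tauto
  rw [h]
  have h3 : ({i, j, p} : Set (Fin n)).ncard = 3 := by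
    rw [Set.ncard_insert_of_notMem (by simp [hij, hip]) (Set.toFinite _),
      Set.ncard_pair hjp]
  have := Set.ncard_add_ncard_compl ({i, j, p} : Set (Fin n))
  rw [h3, Nat.card_eq_fintype_card, Fintype.card_fin] at this
  omega


lemma countA {c v : Fin n → ZMod 2} {ε : ZMod 2} (hc : c ∈ C) (hφ : phi i c = ε)
    (hv : v = c ∨ v = c + unitVec n i) :
    {w | hammingDist v w = 1 ∧ w ∈ Cl hC i ε True}.ncard = 1 ∧
    {w | hammingDist v w = 1 ∧ w ∈ Cl hC i ε False}.ncard = n - 1 ∧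
    {w | hammingDist v w = 1 ∧ w ∈ Cl hC i (ε + 1) True}.ncard = 0 ∧
    {w | hammingDist v w = 1 ∧ w ∈ Cl hC i (ε + 1) False}.ncard = 0 := by
  have hkey : ∀ m, phi i (cw hC (v + unitVec n m)) = ε ∧
      (Ash C i (v + unitVec n m) ↔ m = i) := by
    rcases hv with rfl | rfl
    exacts [rowA0 hC hc hφ, rowA1 hC hc hφ]
  refine ⟨?_, ?_, ?_, ?_⟩
  · rw [ncount]
    have hs : {m : Fin n | v + unitVec n m ∈ Cl hC i ε True} = {i} := by
      ext m
      rw [Set.mem_setOf_eq, mem_ClT_iff hC, Set.mem_singleton_iff]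
      exact ⟨fun h => (hkey m).2.mp h.2, fun h => ⟨(hkey m).1, (hkey m).2.mpr h⟩⟩
    rw [hs, Set.ncard_singleton]
  · rw [ncount]
    have hs : {m : Fin n | v + unitVec n m ∈ Cl hC i ε False} = {m | m ≠ i} := by
      ext m
      rw [Set.mem_setOf_eq, mem_ClF_iff hC, Set.mem_setOf_eq]
      exact ⟨fun h hmi => h.2 ((hkey m).2.mpr hmi),
        fun h => ⟨(hkey m).1, fun hA => h ((hkey m).2.mp hA)⟩⟩
    rw [hs, ncard_ne_singleton]
  · rw [ncount]
    have hs : {m : Fin n | v + unitVec n m ∈ Cl hC i (ε + 1) True} = ∅ := by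
      ext m
      simp only [Set.mem_setOf_eq, mem_ClT_iff hC, Set.mem_empty_iff_false, iff_false]
      rintro ⟨h1, _⟩
      exact eps_ne ε (h1.symm.trans (hkey m).1)
    rw [hs, Set.ncard_empty]
  · rw [ncount]
    have hs : {m : Fin n | v + unitVec n m ∈ Cl hC i (ε + 1) False} = ∅ := by
      ext m
      simp only [Set.mem_setOf_eq, mem_ClF_iff hC, Set.mem_empty_iff_false, iff_false]
      rintro ⟨h1, _⟩
      exact eps_ne ε (h1.symm.trans (hkey m).1)
    rw [hs, Set.ncard_empty]

lemma countB {c v : Fin n → ZMod 2} {ε : ZMod 2} {j : Fin n}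
    (hc : c ∈ C) (hφ : phi i c = ε) (hj : j ≠ i) (hv : v = c + unitVec n j) :
    {w | hammingDist v w = 1 ∧ w ∈ Cl hC i ε True}.ncard = 2 ∧
    {w | hammingDist v w = 1 ∧ w ∈ Cl hC i ε False}.ncard = 1 ∧
    {w | hammingDist v w = 1 ∧ w ∈ Cl hC i (ε + 1) False}.ncard = n - 3 ∧
    {w | hammingDist v w = 1 ∧ w ∈ Cl hC i (ε + 1) True}.ncard = 0 := by
  subst hv
  obtain ⟨p, hpi, hpj, hkey⟩ := rowB hC hc hφ hj
  refine ⟨?_, ?_, ?_, ?_⟩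
  · rw [ncount]
    have hs : {m : Fin n | c + unitVec n j + unitVec n m ∈ Cl hC i ε True}
        = {j, p} := by
      ext m
      rw [Set.mem_setOf_eq, mem_ClT_iff hC]
      simp only [Set.mem_insert_iff, Set.mem_singleton_iff]
      constructor
      · rintro ⟨h1, h2⟩
        by_contra hcon
        push_neg at hcon
        by_cases hmi : m = i
        · exact ((hkey m).2.1 hmi).2 h2
        · exact ((hkey m).2.2 hmi hcon.1 hcon.2).2 h2
      · intro h
        exact (hkey m).1 h
    rw [hs, Set.ncard_pair (fun h => hpj h.symm)]
  · rw [ncount]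
    have hs : {m : Fin n | c + unitVec n j + unitVec n m ∈ Cl hC i ε False}
        = {i} := by
      ext m
      rw [Set.mem_setOf_eq, mem_ClF_iff hC, Set.mem_singleton_iff]
      constructor
      · rintro ⟨h1, h2⟩
        by_contra hmi
        by_cases hmjp : m = j ∨ m = p
        · exact h2 ((hkey m).1 hmjp).2
        · push_neg at hmjp
          have := ((hkey m).2.2 hmi hmjp.1 hmjp.2).1
          exact eps_ne ε (this ▸ h1)
      · intro h
        exact (hkey m).2.1 h
    rw [hs, Set.ncard_singleton]
  · rw [ncount]
    have hs : {m : Fin n | c + unitVec n j + unitVec n m ∈ Cl hC i (ε + 1) False}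
        = {m | m ≠ i ∧ m ≠ j ∧ m ≠ p} := by
      ext m
      rw [Set.mem_setOf_eq, mem_ClF_iff hC, Set.mem_setOf_eq]
      constructor
      · rintro ⟨h1, h2⟩
        refine ⟨?_, ?_, ?_⟩
        · intro hmi
          have := ((hkey m).2.1 hmi).1
          exact eps_ne ε (this ▸ h1).symm
        · intro hmj
          exact h2 ((hkey m).1 (Or.inl hmj)).2
        · intro hmp
          exact h2 ((hkey m).1 (Or.inr hmp)).2
      · rintro ⟨h1, h2, h3⟩
        exact ((hkey m).2.2 h1 h2 h3)
    rw [hs, ncard_ne_triple (fun h => hj h.symm) (fun h => hpi h.symm)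
      (fun h => hpj h.symm)]
  · rw [ncount]
    have hs : {m : Fin n | c + unitVec n j + unitVec n m ∈ Cl hC i (ε + 1) True}
        = ∅ := by
      ext m
      simp only [Set.mem_setOf_eq, mem_ClT_iff hC, Set.mem_empty_iff_false, iff_false]
      rintro ⟨h1, h2⟩
      by_cases hmjp : m = j ∨ m = p
      · exact eps_ne ε (((hkey m).1 hmjp).1 ▸ h1).symm
      · push_neg at hmjp
        by_cases hmi : m = i
        · exact eps_ne ε (((hkey m).2.1 hmi).1 ▸ h1).symm
        · exact ((hkey m).2.2 hmi hmjp.1 hmjp.2).2 h2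
    rw [hs, Set.ncard_empty]

lemma Cl_cases (v : Fin n → ZMod 2) :
    v ∈ Cl hC i 0 True ∨ v ∈ Cl hC i 0 False ∨
    v ∈ Cl hC i 1 False ∨ v ∈ Cl hC i 1 True := by
  classical
  rcases zmod2_cases (phi i (cw hC v)) with h | h <;> by_cases hA : Ash C i v
  · exact Or.inl ⟨h, iff_of_true hA trivial⟩
  · exact Or.inr (Or.inl ⟨h, iff_of_false hA not_false⟩)
  · exact Or.inr (Or.inr (Or.inr ⟨h, iff_of_true hA trivial⟩))
  · exact Or.inr (Or.inr (Or.inl ⟨h, iff_of_false hA not_false⟩))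

lemma Cl_disj_eps {b b' : Prop} : Disjoint (Cl hC i 0 b) (Cl hC i 1 b') := by
  rw [Set.disjoint_left]
  rintro w ⟨h1, _⟩ ⟨h2, _⟩
  rw [h1] at h2
  exact absurd h2 (by decide)

lemma Cl_disj_sh {ε ε' : ZMod 2} : Disjoint (Cl hC i ε True) (Cl hC i ε' False) := by
  rw [Set.disjoint_left]
  rintro w ⟨_, h1⟩ ⟨_, h2⟩
  exact h2.mp (h1.mpr trivial)

end Code
end Aux



open Aux

theorem stmt_15 (r n : ℕ) (hr : 3 ≤ r) (hn : n = 2 ^ r - 1)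
    (C : Set (Fin n → ZMod 2)) (hC : IsPerfectCode n C) (i : Fin n)
    (I I' I1 I1' : Set (Fin n → ZMod 2))
    (hI : I = {x ∈ C | IEven n i x}) (hI' : I' = {x ∈ C | ¬ IEven n i x})
    (hI1 : I1 = DistOne n (I ∪ (fun x => x + unitVec n i) '' I))
    (hI1' : I1' = DistOne n (I' ∪ (fun x => x + unitVec n i) '' I')) :
    (∀ j k : Fin 4, j ≠ k →
      Disjoint (![I ∪ (fun x => x + unitVec n i) '' I, I1, I1',
          I' ∪ (fun x => x + unitVec n i) '' I'] j)
        (![I ∪ (fun x => x + unitVec n i) '' I, I1, I1',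
          I' ∪ (fun x => x + unitVec n i) '' I'] k)) ∧
    (⋃ j : Fin 4, ![I ∪ (fun x => x + unitVec n i) '' I, I1, I1',
        I' ∪ (fun x => x + unitVec n i) '' I'] j) = Set.univ ∧
    (∀ j : Fin 4, ∀ v ∈ ![I ∪ (fun x => x + unitVec n i) '' I, I1, I1',
        I' ∪ (fun x => x + unitVec n i) '' I'] j, ∀ k : Fin 4,
      {w | hammingDist v w = 1 ∧
          w ∈ ![I ∪ (fun x => x + unitVec n i) '' I, I1, I1',
            I' ∪ (fun x => x + unitVec n i) '' I'] k}.ncard =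
        ![![1, n - 1, 0, 0],
          ![2, 1, n - 3, 0],
          ![0, n - 3, 1, 2],
          ![0, 0, n - 1, 1]] j k) := by
  subst hI1 hI1' hI hI'
  have hIeq : {x ∈ C | IEven n i x} = {x ∈ C | phi i x = 0} := by
    ext x; simp only [Set.mem_setOf_eq, iEven_iff_phi]
  have hI'eq : {x ∈ C | ¬ IEven n i x} = {x ∈ C | phi i x = 1} := by
    ext x; simp only [Set.mem_setOf_eq, not_iEven_iff_phi]
  have h0 : {x ∈ C | IEven n i x} ∪
      (fun x => x + unitVec n i) '' {x ∈ C | IEven n i x} = Cl hC i 0 True := by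
    rw [hIeq, charA hC 0]
  have h3 : {x ∈ C | ¬ IEven n i x} ∪
      (fun x => x + unitVec n i) '' {x ∈ C | ¬ IEven n i x} = Cl hC i 1 True := by
    rw [hI'eq, charA hC 1]
  rw [h0, h3, charB hC 0, charB hC 1]
  refine ⟨?_, ?_, ?_⟩
  · intro j k hjk
    fin_cases j <;> fin_cases k <;>
      first
        | (exact absurd rfl hjk)
        | exact Cl_disj_sh hC
        | exact (Cl_disj_sh hC).symm
        | exact Cl_disj_eps hC
        | exact (Cl_disj_eps hC).symm
  · ext v
    simp only [Set.mem_iUnion, Set.mem_univ, iff_true]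
    rcases Cl_cases hC v with h | h | h | h
    · exact ⟨0, h⟩
    · exact ⟨1, h⟩
    · exact ⟨2, h⟩
    · exact ⟨3, h⟩
  · intro j
    fin_cases j <;> intro v hv k
    · -- j = 0 : v ∈ Cl 0 True
      obtain ⟨hφ, hAs⟩ := (mem_ClT_iff hC).mp hv
      have hdata : ∃ c, c ∈ C ∧ phi i c = 0 ∧ (v = c ∨ v = c + unitVec n i) := by
        rcases hAs with hvC | hvC
        · exact ⟨v, hvC, by rw [← cw_self hC hvC]; exact hφ, Or.inl rfl⟩
        · refine ⟨v + unitVec n i, hvC, ?_, Or.inr (vcancel v _).symm⟩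
          rw [cw_unique hC hvC (le_of_eq (dist_add_unit v i))]
          exact hφ
      obtain ⟨c, hc, hφc, hvc⟩ := hdata
      obtain ⟨e1, e2, e3, e4⟩ := countA hC hc hφc hvc
      rw [zero_add] at e3 e4
      fin_cases k
      · exact e1
      · exact e2
      · exact e4
      · exact e3
    · -- j = 1 : v ∈ Cl 0 False
      obtain ⟨hφ, hAs⟩ := (mem_ClF_iff hC).mp hv
      have hvC : v ∉ C := fun h => hAs (Or.inl h)
      rcases cw_decomp hC v with h | ⟨j0, hj0⟩
      · exact absurd (h ▸ cw_mem hC v) hvC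
      have hj0i : j0 ≠ i := by
        rintro rfl
        exact hAs (Or.inr (by rw [hj0, vcancel]; exact cw_mem hC v))
      have hφc : phi i (cw hC v) = 0 := hφ
      obtain ⟨e1, e2, e3, e4⟩ := countB hC (cw_mem hC v) hφc hj0i hj0
      rw [zero_add] at e3 e4
      fin_cases k
      · exact e1
      · exact e2
      · exact e3
      · exact e4
    · -- j = 2 : v ∈ Cl 1 False
      obtain ⟨hφ, hAs⟩ := (mem_ClF_iff hC).mp hv
      have hvC : v ∉ C := fun h => hAs (Or.inl h)
      rcases cw_decomp hC v with h | ⟨j0, hj0⟩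
      · exact absurd (h ▸ cw_mem hC v) hvC
      have hj0i : j0 ≠ i := by
        rintro rfl
        exact hAs (Or.inr (by rw [hj0, vcancel]; exact cw_mem hC v))
      obtain ⟨e1, e2, e3, e4⟩ := countB hC (cw_mem hC v) hφ hj0i hj0
      rw [show (1 : ZMod 2) + 1 = 0 from by decide] at e3 e4
      fin_cases k
      · exact e4
      · exact e3
      · exact e2
      · exact e1
    · -- j = 3 : v ∈ Cl 1 True
      obtain ⟨hφ, hAs⟩ := (mem_ClT_iff hC).mp hv
      have hdata : ∃ c, c ∈ C ∧ phi i c = 1 ∧ (v = c ∨ v = c + unitVec n i) := by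
        rcases hAs with hvC | hvC
        · exact ⟨v, hvC, by rw [← cw_self hC hvC]; exact hφ, Or.inl rfl⟩
        · refine ⟨v + unitVec n i, hvC, ?_, Or.inr (vcancel v _).symm⟩
          rw [cw_unique hC hvC (le_of_eq (dist_add_unit v i))]
          exact hφ
      obtain ⟨c, hc, hφc, hvc⟩ := hdata
      obtain ⟨e1, e2, e3, e4⟩ := countA hC hc hφc hvc
      rw [show (1 : ZMod 2) + 1 = 0 from by decide] at e3 e4
      fin_cases k
      · exact e3
      · exact e4
      · exact e2
      · exact e1
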